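/- arXiv:0706.3950 — 2 statements merged into one kernel-verified Lean document; each statement's English description precedes it below -/
import Mathlib

section
/- Let F be a k-valued function from a set A to an ordered set B (i.e., F assigns to each a in A a nonempty subset of B of size at most k, where each F(a) is finite and linearly ordered). If A contains at least two distinguished elements, then there is an ordinary function f from A^k to B whose image equals the union of the sets F(a) for a in A. -/
/-- A `k`-valued function `F : A → B` (each value a nonempty finite subset of the
linearly ordered set `B` of size at most `k`) can be replaced, provided `A` has two
distinguished elements, by an ordinary function `f : A^k → B` with the same image. -/
theorem kValued_to_function {A B : Type*} [LinearOrder B] (k : ℕ)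
    (F : A → Finset B) (hne : ∀ a, (F a).Nonempty) (hcard : ∀ a, (F a).card ≤ k)
    (a₁ a₂ : A) (ha : a₁ ≠ a₂) :
    ∃ f : (Fin k → A) → B, Set.range f = {b : B | ∃ a : A, b ∈ F a} := by
  classical
  have hk : 0 < k := lt_of_lt_of_le (Finset.card_pos.mpr (hne a₁)) (hcard a₁)
  haveI : NeZero k := ⟨hk.ne'⟩
  refine ⟨fun v =>
      ((F (v 0)).sort (· ≤ ·)).getD
        ((Finset.univ.filter (fun j : Fin k => j ≠ 0 ∧ v j = a₂)).card)
        ((F (v 0)).min' (hne _)), ?_⟩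
  ext b
  simp only [Set.mem_range, Set.mem_setOf_eq]
  constructor
  · rintro ⟨v, rfl⟩
    refine ⟨v 0, ?_⟩
    set l := (F (v 0)).sort (· ≤ ·) with hl
    set i := (Finset.univ.filter (fun j : Fin k => j ≠ 0 ∧ v j = a₂)).card with hi
    by_cases h : i < l.length
    · rw [List.getD_eq_getElem _ _ h]
      have := List.getElem_mem h
      rwa [← Finset.mem_sort (α := B) (· ≤ ·)]
    · rw [List.getD_eq_default _ _ (not_lt.mp h)]
      exact Finset.min'_mem _ _
  · rintro ⟨a, hb⟩
    set l := (F a).sort (· ≤ ·) with hl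
    have hbl : b ∈ l := (Finset.mem_sort _).mpr hb
    obtain ⟨i, hi, hib⟩ := List.getElem_of_mem hbl
    have hik : i < k := lt_of_lt_of_le (by simpa [hl] using hi) (hcard a)
    set v : Fin k → A := fun j => if (j : ℕ) = 0 then a else if (j : ℕ) ≤ i then a₂ else a₁
      with hv
    refine ⟨v, ?_⟩
    have h0 : v 0 = a := by simp [hv]
    have hcount : (Finset.univ.filter (fun j : Fin k => j ≠ 0 ∧ v j = a₂)).card = i := by
      have hset : (Finset.univ.filter (fun j : Fin k => j ≠ 0 ∧ v j = a₂))
          = Finset.Ioc (0 : Fin k) ⟨i, hik⟩ := by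
        ext j
        simp only [Finset.mem_filter, Finset.mem_univ, true_and, Finset.mem_Ioc, hv]
        constructor
        · rintro ⟨hj0, hj⟩
          have hj0' : (j : ℕ) ≠ 0 := fun h => hj0 (Fin.ext (by simpa using h))
          rw [if_neg hj0'] at hj
          by_cases hle : (j : ℕ) ≤ i
          · exact ⟨Fin.lt_def.mpr (Nat.pos_of_ne_zero hj0'),
              by simpa [Fin.le_def] using hle⟩
          · rw [if_neg hle] at hj; exact absurd hj ha
        · rintro ⟨hj0, hj⟩
          have hj0' : (j : ℕ) ≠ 0 := by
            have := Fin.lt_def.mp hj0; rw [Fin.val_zero] at this; omega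
          have hle : (j : ℕ) ≤ i := by simpa [Fin.le_def] using hj
          exact ⟨fun h => hj0' (by simp [h]), by rw [if_neg hj0', if_pos hle]⟩
      rw [hset, Fin.card_Ioc]
      simp
    rw [h0, hcount, List.getD_eq_getElem _ _ (by simpa [hl] using hi)]
    exact hib
end

section
/- Let R be an o-minimal expansion of an ordered group, B ⊆ R^n a cell on which two definable continuous functions f₁, f₂ : B → R satisfy f₁(x) < f₂(x) for all x ∈ B, and let D ⊆ B be a dense subset of B. Then the union over g ∈ D of the open intervals (f₁(g), f₂(g)) equals the open interval (inf f₁(B), sup f₂(B)) intersected with the appropriate endpoints, i.e., it is an interval: every d with inf f₁(B) < d < sup f₂(B) lies in some (f₁(g), f₂(g)) with g ∈ D. -/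
/-- Let `B ⊆ M^n` be a preconnected set (in an ordered abelian group `M` with its order
topology), `f₁ f₂` continuous on `B` with `f₁ < f₂` pointwise on `B`, and `D` a dense
subset of `B`.  Then `⋃_{g ∈ D} (f₁ g, f₂ g)` is an interval: every `d` with
`inf f₁(B) < d < sup f₂(B)` (i.e. `f₁ c₁ < d` and `d < f₂ c₂` for some `c₁, c₂ ∈ B`)
lies in some `(f₁ g, f₂ g)` with `g ∈ D`. -/
theorem union_of_intervals_is_interval {M : Type*} [AddCommGroup M] [LinearOrder M] [IsOrderedAddMonoid M]
    [TopologicalSpace M] [OrderTopology M] (n : ℕ)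
    (B : Set (Fin n → M)) (hB : IsPreconnected B)
    (f₁ f₂ : (Fin n → M) → M)
    (h₁ : ContinuousOn f₁ B) (h₂ : ContinuousOn f₂ B)
    (hlt : ∀ x ∈ B, f₁ x < f₂ x)
    (D : Set (Fin n → M)) (hDB : D ⊆ B) (hdense : B ⊆ closure D) :
    ∀ d : M, (∃ c ∈ B, f₁ c < d) → (∃ c ∈ B, d < f₂ c) →
      ∃ g ∈ D, f₁ g < d ∧ d < f₂ g := by
  intro d hc₁ hc₂
  obtain ⟨u₁, hu₁, heq₁⟩ := (continuousOn_iff'.1 h₁) (Set.Iio d) isOpen_Iio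
  obtain ⟨u₂, hu₂, heq₂⟩ := (continuousOn_iff'.1 h₂) (Set.Ioi d) isOpen_Ioi
  have hcover : B ⊆ u₁ ∪ u₂ := by
    intro x hx
    rcases lt_or_ge (f₁ x) d with h | h
    · have : x ∈ u₁ ∩ B := heq₁ ▸ ⟨h, hx⟩
      exact Or.inl this.1
    · have : x ∈ u₂ ∩ B := heq₂ ▸ ⟨lt_of_le_of_lt h (hlt x hx), hx⟩
      exact Or.inr this.1
  obtain ⟨c₁, hc₁B, hc₁d⟩ := hc₁
  obtain ⟨c₂, hc₂B, hc₂d⟩ := hc₂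
  have hne₁ : (B ∩ u₁).Nonempty := ⟨c₁, hc₁B, (heq₁ ▸ (⟨hc₁d, hc₁B⟩ : c₁ ∈ f₁ ⁻¹' Set.Iio d ∩ B) : c₁ ∈ u₁ ∩ B).1⟩
  have hne₂ : (B ∩ u₂).Nonempty := ⟨c₂, hc₂B, (heq₂ ▸ (⟨hc₂d, hc₂B⟩ : c₂ ∈ f₂ ⁻¹' Set.Ioi d ∩ B) : c₂ ∈ u₂ ∩ B).1⟩
  obtain ⟨x, hxB, hx₁, hx₂⟩ := hB u₁ u₂ hu₁ hu₂ hcover hne₁ hne₂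
  have hxcl : x ∈ closure D := hdense hxB
  obtain ⟨g, hgu, hgD⟩ := (mem_closure_iff.1 hxcl) (u₁ ∩ u₂) (hu₁.inter hu₂) ⟨hx₁, hx₂⟩
  have hgB : g ∈ B := hDB hgD
  have hg₁ : g ∈ f₁ ⁻¹' Set.Iio d ∩ B := heq₁ ▸ ⟨hgu.1, hgB⟩
  have hg₂ : g ∈ f₂ ⁻¹' Set.Ioi d ∩ B := heq₂ ▸ ⟨hgu.2, hgB⟩
  exact ⟨g, hgD, hg₁.1, hg₂.1⟩
end
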